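/- arXiv:1810.03105 — 3 statements merged into one kernel-verified Lean document; each statement's English description precedes it below -/
import Mathlib

section
/- If ω_0 ≤ 1 and for all s ≥ 1, ω_s = (√(ω_{s-1}⁴ + 4ω_{s-1}²) - ω_{s-1}²)/2 with each ω_{s-1} > 0, then ω_s ≤ 2/(s+2) for all s ≥ 0. -/
set_option maxHeartbeats 1000000


theorem stmt1 (ω : ℕ → ℝ) (hpos : ∀ s, 0 < ω s) (h01 : ω 0 ≤ 1)
    (hrec : ∀ s : ℕ, 1 ≤ s →
      ω s = (Real.sqrt ((ω (s - 1)) ^ 4 + 4 * (ω (s - 1)) ^ 2) - (ω (s - 1)) ^ 2) / 2) :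
    ∀ s : ℕ, ω s ≤ 2 / ((s : ℝ) + 2) := by
  intro s
  induction s with
  | zero => norm_num; linarith
  | succ n ih =>
    have ha := hpos n
    have hb := hpos (n + 1)
    have hr := hrec (n + 1) (by omega)
    simp only [Nat.add_sub_cancel] at hr
    set a := ω n with hA
    set b := ω (n + 1) with hB
    set c : ℝ := (n : ℝ) with hC
    have hc : (0:ℝ) ≤ c := hC ▸ Nat.cast_nonneg n
    clear_value a b c
    have hD : (0:ℝ) ≤ a ^ 4 + 4 * a ^ 2 := by positivity
    have hs : Real.sqrt (a ^ 4 + 4 * a ^ 2) = 2 * b + a ^ 2 := by rw [hr]; ring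
    have hsq := Real.sq_sqrt hD
    rw [hs] at hsq
    have hkey : b ^ 2 + a ^ 2 * b = a ^ 2 := by nlinarith [hsq]
    have hb1 : b < 1 := by nlinarith
    have ht : (0:ℝ) < c + 2 := by positivity
    have ht3 : (0:ℝ) < c + 1 + 2 := by positivity
    have ih' : a * (c + 2) ≤ 2 := (le_div_iff₀ ht).mp ih
    push_cast
    rw [← hC, le_div_iff₀ ht3]
    by_contra hcon
    push_neg at hcon
    have h33 : (0:ℝ) < c + 3 := by linarith
    have hcon' : 2 < b * (c + 3) := by nlinarith [hcon]
    have H1 : a ^ 2 * (c + 2) ^ 2 ≤ 4 := by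
      nlinarith [mul_nonneg (sub_nonneg.mpr ih') (by positivity : (0:ℝ) ≤ 2 + a * (c + 2))]
    have H2 : 4 < b ^ 2 * (c + 3) ^ 2 := by
      nlinarith [mul_pos (by linarith : (0:ℝ) < b * (c + 3) - 2) (by nlinarith [mul_pos hb h33] : (0:ℝ) < b * (c + 3) + 2)]
    have H3 : b ^ 2 * (c + 2) ^ 2 ≤ 4 * (1 - b) := by
      nlinarith [hkey, H1, sub_pos.mpr hb1, mul_nonneg (sub_nonneg.mpr H1) (sub_pos.mpr hb1).le]
    have H4 : (c + 2) ^ 2 < (1 - b) * (c + 3) ^ 2 := by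
      nlinarith [mul_le_mul_of_nonneg_right H3 (sq_nonneg (c + 3)),
        mul_lt_mul_of_pos_right H2 (mul_pos ht ht), sq_nonneg (c + 2)]
    have H5 : 2 * (c + 3) < b * (c + 3) ^ 2 := by nlinarith [mul_lt_mul_of_pos_right hcon' h33]
    nlinarith [H4, H5]
end

section
/- Let f_1, ..., f_n : ℝ^d → ℝ be convex and differentiable with each f_i having L_i-Lipschitz gradient, let p_1, ..., p_n > 0 sum to 1, set f = (1/n)∑_i f_i and L̃ = max_j L_j/(n p_j). Fix points x, x̃ ∈ ℝ^d, and let the random index i be drawn with P(i = j) = p_j. Define the estimator g_i = [∇f_i(x) - ∇f_i(x̃)]/(n p_i) + ∇f(x̃). Then E[‖g_i - ∇f(x)‖²] ≤ 2L̃ (f(x̃) - f(x) + ⟨∇f(x), x - x̃⟩). -/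
open RealInnerProductSpace

variable {F : Type*} [NormedAddCommGroup F] [InnerProductSpace ℝ F] [CompleteSpace F]

lemma inner_gradient_eq (g : F → ℝ) (z v : F) :
    ⟪gradient g z, v⟫ = fderiv ℝ g z v := by
  simp [gradient]

lemma hasDerivAt_line (g : F → ℝ) (hg : Differentiable ℝ g) (u w : F) (t : ℝ) :
    HasDerivAt (fun s : ℝ => g (u + s • (w - u))) ⟪gradient g (u + t • (w - u)), w - u⟫ t := by
  have hc : HasDerivAt (fun s : ℝ => u + s • (w - u)) (w - u) t := by
    simpa using ((hasDerivAt_id t).smul_const (w - u)).const_add u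
  have h2 := (hg (u + t • (w - u))).hasFDerivAt.comp_hasDerivAt t hc
  rwa [inner_gradient_eq]

lemma grad_lower_bound (g : F → ℝ) (hconv : ConvexOn ℝ Set.univ g)
    (hg : Differentiable ℝ g) (u w : F) :
    g u + ⟪gradient g u, w - u⟫ ≤ g w := by
  have hφ : ConvexOn ℝ Set.univ (fun s : ℝ => g (u + s • (w - u))) := by
    have := hconv.comp_affineMap (AffineMap.lineMap u w)
    simp only [Function.comp_def, AffineMap.lineMap_apply, vsub_eq_sub, vadd_eq_add,
      Set.preimage_univ] at this
    have heq : (fun s : ℝ => g (u + s • (w - u))) = fun x : ℝ => g (x • (w - u) + u) := by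
      funext s; rw [add_comm]
    rw [heq]; exact this
  have hd := hasDerivAt_line g hg u w 0
  rw [zero_smul, add_zero] at hd
  have hs := hφ.le_slope_of_hasDerivAt (Set.mem_univ (0:ℝ)) (Set.mem_univ 1) one_pos hd
  simp [slope_def_field] at hs
  linarith [inner_gradient_eq g u (w - u), map_sub (fderiv ℝ g u) w u]

lemma descent (g : F → ℝ) (hg : Differentiable ℝ g) {Lg : ℝ} (hL : 0 ≤ Lg)
    (hLip : ∀ a b, ‖gradient g a - gradient g b‖ ≤ Lg * ‖a - b‖) (u w : F) :
    g w ≤ g u + ⟪gradient g u, w - u⟫ + Lg / 2 * ‖w - u‖ ^ 2 := by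
  set c : ℝ → F := fun t => u + t • (w - u) with hc
  have hgc : Continuous (gradient g) := by
    have : LipschitzWith ⟨Lg, hL⟩ (gradient g) := by
      apply LipschitzWith.of_dist_le_mul
      intro a b
      rw [dist_eq_norm, dist_eq_norm]; exact hLip a b
    exact this.continuous
  have hccont : Continuous c := by
    continuity
  have hφ' : Continuous (fun t : ℝ => ⟪gradient g (c t), w - u⟫) :=
    ((hgc.comp hccont).inner continuous_const)
  have hftc : g w - g u = ∫ t in (0:ℝ)..1, ⟪gradient g (c t), w - u⟫ := by
    have := intervalIntegral.integral_eq_sub_of_hasDerivAt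
      (f := fun s : ℝ => g (c s)) (f' := fun t => ⟪gradient g (c t), w - u⟫)
      (a := (0:ℝ)) (b := 1)
      (fun t _ => hasDerivAt_line g hg u w t)
      (hφ'.intervalIntegrable 0 1)
    simp [hc] at this
    rw [← this]; simp [hc, inner_gradient_eq]
  have hbound : ∀ t ∈ Set.Icc (0:ℝ) 1,
      ⟪gradient g (c t), w - u⟫ ≤ ⟪gradient g u, w - u⟫ + (Lg * ‖w - u‖ ^ 2) * t := by
    intro t ht
    have h1 : ⟪gradient g (c t) - gradient g u, w - u⟫ ≤ ‖gradient g (c t) - gradient g u‖ * ‖w - u‖ :=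
      real_inner_le_norm _ _
    have h2 : ‖gradient g (c t) - gradient g u‖ ≤ Lg * (t * ‖w - u‖) := by
      have := hLip (c t) u
      simpa [hc, norm_smul, abs_of_nonneg ht.1] using this
    have h3 : ‖gradient g (c t) - gradient g u‖ * ‖w - u‖ ≤ Lg * (t * ‖w - u‖) * ‖w - u‖ :=
      mul_le_mul_of_nonneg_right h2 (norm_nonneg _)
    rw [inner_sub_left] at h1
    nlinarith [norm_nonneg (w - u)]
  have hint : (∫ t in (0:ℝ)..1, (⟪gradient g u, w - u⟫ + (Lg * ‖w - u‖ ^ 2) * t))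
      = ⟪gradient g u, w - u⟫ + Lg / 2 * ‖w - u‖ ^ 2 := by
    have hi2 : IntervalIntegrable (fun t : ℝ => (Lg * ‖w - u‖ ^ 2) * t) MeasureTheory.volume 0 1 :=
      (continuous_const.mul continuous_id).intervalIntegrable 0 1
    rw [intervalIntegral.integral_add intervalIntegrable_const hi2,
      intervalIntegral.integral_const_mul]
    simp [integral_id]
    ring
  have hmono := intervalIntegral.integral_mono_on (by norm_num : (0:ℝ) ≤ 1)
    (hφ'.intervalIntegrable 0 1)
    ((continuous_const.add (continuous_const.mul continuous_id)).intervalIntegrable 0 1 :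
      IntervalIntegrable (fun t : ℝ => ⟪gradient g u, w - u⟫ + (Lg * ‖w - u‖ ^ 2) * t)
        MeasureTheory.volume 0 1)
    hbound
  simp only [Pi.add_apply, Pi.mul_apply, id_eq] at hmono
  rw [hint] at hmono
  linarith [hftc, hmono]

lemma cocoercive (g : F → ℝ) (hconv : ConvexOn ℝ Set.univ g)
    (hg : Differentiable ℝ g) {Lg : ℝ} (hL : 0 < Lg)
    (hLip : ∀ a b, ‖gradient g a - gradient g b‖ ≤ Lg * ‖a - b‖) (u w : F) :
    ‖gradient g u - gradient g w‖ ^ 2 ≤ 2 * Lg * (g u - g w - ⟪gradient g w, u - w⟫) := by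
  set G := gradient g u - gradient g w with hG
  set y := u - (1/Lg) • G with hy
  have h1 := grad_lower_bound g hconv hg w y
  have h2 := descent g hg hL.le hLip u y
  have hyu : y - u = -((1/Lg) • G) := by rw [hy]; abel
  have hyw : y - w = (u - w) - (1/Lg) • G := by rw [hy]; abel
  have e1 : ⟪gradient g w, y - w⟫ = ⟪gradient g w, u - w⟫ - (1/Lg) * ⟪gradient g w, G⟫ := by
    rw [hyw, inner_sub_right, real_inner_smul_right]
  have e2 : ⟪gradient g u, y - u⟫ = -((1/Lg) * ⟪gradient g u, G⟫) := by
    rw [hyu, inner_neg_right, real_inner_smul_right]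
  have e3 : ‖y - u‖ ^ 2 = (1/Lg) ^ 2 * ‖G‖ ^ 2 := by
    rw [hyu, norm_neg, norm_smul]
    rw [mul_pow, Real.norm_eq_abs, sq_abs]
  have e4 : ⟪gradient g u, G⟫ - ⟪gradient g w, G⟫ = ‖G‖ ^ 2 := by
    rw [← inner_sub_left, ← hG, real_inner_self_eq_norm_sq]
  rw [e1] at h1
  rw [e2, e3] at h2
  have hLne : Lg ≠ 0 := hL.ne'
  have key : (1 / (2 * Lg)) * ‖G‖ ^ 2 ≤ g u - g w - ⟪gradient g w, u - w⟫ := by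
    have expand : Lg / 2 * ((1/Lg) ^ 2 * ‖G‖ ^ 2) = (1 / (2 * Lg)) * ‖G‖ ^ 2 := by
      field_simp
    rw [expand] at h2
    have h3 : 1/Lg * ⟪gradient g u, G⟫ - 1/Lg * ⟪gradient g w, G⟫ = 1/Lg * ‖G‖ ^ 2 := by
      rw [← mul_sub, e4]
    have hhalf : 1/Lg * ‖G‖ ^ 2 = 2 * ((1 / (2 * Lg)) * ‖G‖ ^ 2) := by
      field_simp
    linarith [h1, h2, h3, hhalf]
  have := mul_le_mul_of_nonneg_left key (by positivity : (0:ℝ) ≤ 2 * Lg)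
  calc ‖G‖ ^ 2 = 2 * Lg * ((1 / (2 * Lg)) * ‖G‖ ^ 2) := by field_simp
    _ ≤ 2 * Lg * (g u - g w - ⟪gradient g w, u - w⟫) := this

lemma gradient_avg {n : ℕ} (f : Fin n → F → ℝ) (hdiff : ∀ i, Differentiable ℝ (f i))
    (cc : ℝ) (z : F) :
    gradient (fun y => cc * ∑ j, f j y) z = cc • ∑ j, gradient (f j) z := by
  have hF : HasFDerivAt (fun y => cc * ∑ j, f j y) (cc • ∑ j, fderiv ℝ (f j) z) z := by
    have hs : HasFDerivAt (fun y => ∑ j, f j y) (∑ j, fderiv ℝ (f j) z) z :=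
      HasFDerivAt.fun_sum (fun j _ => (hdiff j z).hasFDerivAt)
    exact hs.const_mul cc
  rw [hF.hasGradientAt.gradient]
  simp [gradient, map_smul, map_sum]

theorem stmt5 {d n : ℕ} (hn : 0 < n)
    (f : Fin n → EuclideanSpace ℝ (Fin d) → ℝ) (L p : Fin n → ℝ)
    (hconv : ∀ i, ConvexOn ℝ Set.univ (f i))
    (hdiff : ∀ i, Differentiable ℝ (f i))
    (hLpos : ∀ i, 0 < L i)
    (hLip : ∀ i x y, ‖gradient (f i) x - gradient (f i) y‖ ≤ L i * ‖x - y‖)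
    (hp : ∀ i, 0 < p i) (hp1 : ∑ i, p i = 1)
    (x xt : EuclideanSpace ℝ (Fin d)) :
    ∑ i, p i *
        ‖((1 / ((n : ℝ) * p i)) • (gradient (f i) x - gradient (f i) xt)
            + gradient (fun y => (1 / (n : ℝ)) * ∑ j, f j y) xt)
          - gradient (fun y => (1 / (n : ℝ)) * ∑ j, f j y) x‖ ^ 2
      ≤ 2 * (Finset.univ.sup' ⟨⟨0, hn⟩, Finset.mem_univ _⟩ fun j => L j / ((n : ℝ) * p j)) *
          ((1 / (n : ℝ)) * ∑ j, f j xt - (1 / (n : ℝ)) * ∑ j, f j x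
            + ⟪gradient (fun y => (1 / (n : ℝ)) * ∑ j, f j y) x, x - xt⟫) := by
  classical
  have hnR : (0:ℝ) < n := Nat.cast_pos.mpr hn
  set Gx := gradient (fun y => (1 / (n : ℝ)) * ∑ j, f j y) x with hGxdef
  set Gt := gradient (fun y => (1 / (n : ℝ)) * ∑ j, f j y) xt with hGtdef
  have hGx : Gx = (1/(n:ℝ)) • ∑ j, gradient (f j) x := gradient_avg f hdiff _ x
  have hGt : Gt = (1/(n:ℝ)) • ∑ j, gradient (f j) xt := gradient_avg f hdiff _ xt
  set A : Fin n → EuclideanSpace ℝ (Fin d) :=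
    fun i => gradient (f i) x - gradient (f i) xt with hA
  set v : Fin n → EuclideanSpace ℝ (Fin d) := fun i => (1 / ((n:ℝ) * p i)) • A i with hv
  set m : EuclideanSpace ℝ (Fin d) := Gx - Gt with hmdef
  set Lt := Finset.univ.sup' ⟨⟨0, hn⟩, Finset.mem_univ _⟩
    (fun j => L j / ((n : ℝ) * p j)) with hLt
  set B : Fin n → ℝ := fun i => f i xt - f i x - ⟪gradient (f i) x, xt - x⟫ with hB
  have hterm : ∀ i, ((1 / ((n : ℝ) * p i)) • (gradient (f i) x - gradient (f i) xt) + Gt) - Gx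
      = v i - m := by
    intro i; rw [hv, hA, hmdef]; abel
  have hm : ∑ i, p i • v i = m := by
    have h1 : ∀ i : Fin n, p i • v i = (1/(n:ℝ)) • A i := by
      intro i
      rw [hv, smul_smul]
      congr 1
      rw [mul_one_div, div_eq_div_iff (mul_pos hnR (hp i)).ne' hnR.ne']
      ring
    rw [Finset.sum_congr rfl (fun i _ => h1 i), ← Finset.smul_sum, hmdef, hGx, hGt, ← smul_sub,
      ← Finset.sum_sub_distrib]
  have hinner : ∑ i, p i * ⟪v i, m⟫ = ‖m‖^2 := by
    have h2 : ∑ i, p i * ⟪v i, m⟫ = ⟪∑ i, p i • v i, m⟫ := by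
      rw [sum_inner]
      exact Finset.sum_congr rfl fun i _ => (real_inner_smul_left _ _ _).symm
    rw [h2, hm, real_inner_self_eq_norm_sq]
  have step1 : ∑ i, p i * ‖v i - m‖^2 ≤ ∑ i, p i * ‖v i‖^2 := by
    have expand : ∀ i, p i * ‖v i - m‖^2 =
        p i * ‖v i‖^2 - 2 * (p i * ⟪v i, m⟫) + p i * ‖m‖^2 := by
      intro i
      rw [norm_sub_sq_real]
      ring
    rw [Finset.sum_congr rfl (fun i _ => expand i), Finset.sum_add_distrib,
      Finset.sum_sub_distrib, ← Finset.mul_sum, hinner, ← Finset.sum_mul, hp1]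
    nlinarith [sq_nonneg ‖m‖]
  have hBnn : ∀ i, 0 ≤ B i := by
    intro i
    have := grad_lower_bound (f i) (hconv i) (hdiff i) x xt
    rw [hB]
    simp only
    linarith
  have hLtB : ∀ i, L i / ((n:ℝ) * p i) ≤ Lt := fun i =>
    Finset.le_sup' (fun j => L j / ((n : ℝ) * p j)) (Finset.mem_univ i)
  have hterm2 : ∀ i, p i * ‖v i‖^2 ≤ 2/(n:ℝ) * Lt * B i := by
    intro i
    have hnp : 0 < (n:ℝ) * p i := mul_pos hnR (hp i)
    have hco := cocoercive (f i) (hconv i) (hdiff i) (hLpos i) (hLip i) xt x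
    have hnorm : ‖A i‖ = ‖gradient (f i) xt - gradient (f i) x‖ := by
      rw [hA]; exact norm_sub_rev _ _
    have hv2 : p i * ‖v i‖^2 = (1/((n:ℝ)^2 * p i)) * ‖A i‖^2 := by
      rw [hv, norm_smul, Real.norm_eq_abs, abs_of_pos (by positivity : (0:ℝ) < 1/((n:ℝ)*p i)),
        mul_pow]
      field_simp [hnR.ne', (hp i).ne']
    calc p i * ‖v i‖^2 = (1/((n:ℝ)^2 * p i)) * ‖A i‖^2 := hv2
      _ ≤ (1/((n:ℝ)^2 * p i)) * (2 * L i * B i) := by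
          apply mul_le_mul_of_nonneg_left _
            (one_div_nonneg.mpr (le_of_lt (mul_pos (pow_pos hnR 2) (hp i))))
          rw [hnorm]
          exact hco
      _ = (2/(n:ℝ) * (L i / ((n:ℝ)*p i))) * B i := by
          field_simp [hnR.ne', (hp i).ne']
      _ ≤ 2/(n:ℝ) * Lt * B i :=
          mul_le_mul_of_nonneg_right
            (mul_le_mul_of_nonneg_left (hLtB i) (by positivity)) (hBnn i)
  have step2 : ∑ i, 2/(n:ℝ) * Lt * B i = 2 * Lt *
      ((1/(n:ℝ)) * ∑ j, f j xt - (1/(n:ℝ)) * ∑ j, f j x + ⟪Gx, x - xt⟫) := by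
    have hBsum : ∑ i, B i = ∑ j, f j xt - ∑ j, f j x - ∑ j, ⟪gradient (f j) x, xt - x⟫ := by
      rw [hB, Finset.sum_sub_distrib, Finset.sum_sub_distrib]
    have hGinner : ⟪Gx, x - xt⟫ = -((1/(n:ℝ)) * ∑ j, ⟪gradient (f j) x, xt - x⟫) := by
      have hneg : x - xt = -(xt - x) := by abel
      rw [hGx, real_inner_smul_left, hneg, inner_neg_right, sum_inner]
      ring
    rw [← Finset.mul_sum, hBsum, hGinner]
    ring
  have hgoal : ∑ i, p i * ‖(1 / ((n : ℝ) * p i)) • (gradient (f i) x - gradient (f i) xt)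
        + Gt - Gx‖ ^ 2 = ∑ i, p i * ‖v i - m‖ ^ 2 :=
    Finset.sum_congr rfl fun i _ => by rw [hterm i]
  rw [hgoal]
  calc ∑ i, p i * ‖v i - m‖^2 ≤ ∑ i, p i * ‖v i‖^2 := step1
    _ ≤ ∑ i, 2/(n:ℝ) * Lt * B i := Finset.sum_le_sum (fun i _ => hterm2 i)
    _ = _ := step2
end

section
/- Under the hypotheses of the telescoping recursion with ω_0 = 1 - 1/(α-1) for some α > 2 and ω_{S-1} ≤ 2/(S+1), one has Δ_S ≤ 4(α-1)/((α-2)²(S+1)²) · Δ_0 + 4c/(S+1)² · Λ_0. -/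
theorem stmt16 (S : ℕ) (hS : 1 ≤ S) (Δ Λ ω : ℕ → ℝ) (c : ℝ) (hc : 0 < c)
    (hΔ : ∀ s ≤ S, 0 ≤ Δ s) (hΛ : ∀ s ≤ S, 0 ≤ Λ s)
    (hΛmono : ∀ s t : ℕ, s ≤ t → t ≤ S → Λ t ≤ Λ s)
    (hω : ∀ s < S, 0 < ω s ∧ ω s ≤ 1)
    (hrec : ∀ s : ℕ, 1 ≤ s → s ≤ S →
      Δ s ≤ (1 - ω (s - 1)) * Δ (s - 1) + c * (ω (s - 1)) ^ 2 * (Λ (s - 1) - Λ s))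
    (hid : ∀ s : ℕ, 1 ≤ s → s < S → (1 - ω s) / (ω s) ^ 2 = 1 / (ω (s - 1)) ^ 2)
    (α : ℝ) (hα : 2 < α) (hω0 : ω 0 = 1 - 1 / (α - 1))
    (hωS : ω (S - 1) ≤ 2 / ((S : ℝ) + 1)) :
    Δ S ≤ 4 * (α - 1) / ((α - 2) ^ 2 * ((S : ℝ) + 1) ^ 2) * Δ 0
        + 4 * c / ((S : ℝ) + 1) ^ 2 * Λ 0 := by
  have hα1 : (0:ℝ) < α - 1 := by linarith
  have hα2 : (0:ℝ) < α - 2 := by linarith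
  have hω0pos : 0 < ω 0 := (hω 0 (by omega)).1
  set K : ℝ := (1 - ω 0) / (ω 0) ^ 2 with hK
  have hKω : (ω 0) ^ 2 * K = 1 - ω 0 := by
    rw [hK]; field_simp
  have claim : ∀ s, 1 ≤ s → s ≤ S →
      Δ s ≤ (ω (s - 1)) ^ 2 * (K * Δ 0 + c * (Λ 0 - Λ s)) := by
    intro s
    induction s with
    | zero => intro h; omega
    | succ n ih =>
      intro _ hns
      rcases Nat.eq_zero_or_pos n with hn | hn
      · subst hn
        have h1 := hrec 1 le_rfl hns
        have h2 : ω 0 ^ 2 * K * Δ 0 = (1 - ω 0) * Δ 0 := by rw [hKω]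
        have hexp : ω 0 ^ 2 * (K * Δ 0 + c * (Λ 0 - Λ 1)) =
            ω 0 ^ 2 * K * Δ 0 + c * ω 0 ^ 2 * (Λ 0 - Λ 1) := by ring
        simp only [Nat.sub_self, Nat.zero_add]
        linarith [h1, h2, hexp]
      · have hnS : n < S := by omega
        have hn1S : n - 1 < S := by omega
        have hωn := hω n hnS
        have hωn1 := hω (n - 1) hn1S
        have ihn := ih hn (le_of_lt hnS)
        have hidn := hid n hn hnS
        have hmul : (1 - ω n) * (ω (n - 1)) ^ 2 = (ω n) ^ 2 := by
          have hn0 : (ω n) ^ 2 ≠ 0 := ne_of_gt (pow_pos hωn.1 2)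
          have hn10 : (ω (n - 1)) ^ 2 ≠ 0 := ne_of_gt (pow_pos hωn1.1 2)
          rw [div_eq_div_iff hn0 hn10] at hidn
          linear_combination hidn
        have hr := hrec (n + 1) (by omega) hns
        simp only [Nat.add_sub_cancel] at hr ⊢
        calc Δ (n + 1) ≤ (1 - ω n) * Δ n + c * (ω n) ^ 2 * (Λ n - Λ (n + 1)) := hr
          _ ≤ (1 - ω n) * ((ω (n - 1)) ^ 2 * (K * Δ 0 + c * (Λ 0 - Λ n)))
                + c * (ω n) ^ 2 * (Λ n - Λ (n + 1)) := by
              nlinarith [ihn, hωn.2]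
          _ = (ω n) ^ 2 * (K * Δ 0 + c * (Λ 0 - Λ (n + 1))) := by
              rw [← mul_assoc, hmul]; ring
  have hfin := claim S hS le_rfl
  have hωSpos : 0 < ω (S - 1) := (hω (S - 1) (by omega)).1
  have hS1 : (0:ℝ) < (S : ℝ) + 1 := by positivity
  have hω0' : ω 0 = (α - 2) / (α - 1) := by
    rw [hω0]; field_simp; ring
  have hKval : K = (α - 1) / (α - 2) ^ 2 := by
    have hsq0 : (ω 0) ^ 2 ≠ 0 := by positivity
    have h : (α - 1) / (α - 2) ^ 2 * (ω 0) ^ 2 = 1 - ω 0 := by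
      rw [hω0']
      field_simp
      ring
    have h' : K * (ω 0) ^ 2 = 1 - ω 0 := by linarith [hKω]
    exact mul_right_cancel₀ hsq0 (by rw [h, h'])
  have hKnn : 0 ≤ K := by
    rw [hKval]; positivity
  have hA : 0 ≤ K * Δ 0 + c * (Λ 0 - Λ S) := by
    have h1 := hΔ 0 (by omega)
    have h2 := hΛmono 0 S (by omega) le_rfl
    nlinarith
  have hsq : (ω (S - 1)) ^ 2 ≤ 4 / ((S : ℝ) + 1) ^ 2 := by
    have h4 : (2 / ((S:ℝ) + 1)) * (2 / ((S:ℝ) + 1)) = 4 / ((S:ℝ) + 1) ^ 2 := by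
      field_simp; ring
    have := mul_le_mul hωS hωS (le_of_lt hωSpos) (by positivity)
    calc (ω (S - 1)) ^ 2 = ω (S - 1) * ω (S - 1) := sq (ω (S-1))
      _ ≤ (2 / ((S:ℝ) + 1)) * (2 / ((S:ℝ) + 1)) := this
      _ = 4 / ((S:ℝ) + 1) ^ 2 := h4
  have step : Δ S ≤ 4 / ((S : ℝ) + 1) ^ 2 * (K * Δ 0 + c * (Λ 0 - Λ S)) :=
    le_trans hfin (mul_le_mul_of_nonneg_right hsq hA)
  have hΛS := hΛ S le_rfl
  have heq : 4 / ((S : ℝ) + 1) ^ 2 * K = 4 * (α - 1) / ((α - 2) ^ 2 * ((S : ℝ) + 1) ^ 2) := by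
    rw [hKval]
    field_simp
  have hexp : 4 / ((S : ℝ) + 1) ^ 2 * (K * Δ 0 + c * (Λ 0 - Λ S)) =
      (4 / ((S : ℝ) + 1) ^ 2 * K) * Δ 0 + 4 * c / ((S : ℝ) + 1) ^ 2 * Λ 0
        - 4 * c / ((S : ℝ) + 1) ^ 2 * Λ S := by ring
  have h5 : (4 / ((S : ℝ) + 1) ^ 2 * K) * Δ 0
      = 4 * (α - 1) / ((α - 2) ^ 2 * ((S : ℝ) + 1) ^ 2) * Δ 0 := by rw [heq]
  have hdrop : 0 ≤ 4 * c / ((S : ℝ) + 1) ^ 2 * Λ S := by positivity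
  linarith [step, hexp, h5, hdrop]
end
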